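/- For all n×n real symmetric matrices A and B, Tr(ABAB) ≤ Tr(A²B²). -/
import Mathlib


/-- For real symmetric matrices, Tr(ABAB) ≤ Tr(A²B²). -/
theorem trace_symm_ineq {n : ℕ} (A B : Matrix (Fin n) (Fin n) ℝ)
    (hA : A.IsSymm) (hB : B.IsSymm) :
    (A * B * A * B).trace ≤ (A * A * B * B).trace := by
  have key : 0 ≤ ((A*B - B*A).transpose * (A*B - B*A)).trace := by
    rw [Matrix.trace]
    refine Finset.sum_nonneg fun i _ => ?_
    simp only [Matrix.diag_apply, Matrix.mul_apply, Matrix.transpose_apply]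
    exact Finset.sum_nonneg fun j _ => mul_self_nonneg _
  have ht : (A*B - B*A).transpose = B*A - A*B := by
    rw [Matrix.transpose_sub, Matrix.transpose_mul, Matrix.transpose_mul, hA, hB]
  rw [ht] at key
  have h1 : (B*A*(A*B)).trace = (A*A*B*B).trace := by
    rw [Matrix.trace_mul_comm, show A*B*(B*A) = A*(B*B*A) by noncomm_ring,
      Matrix.trace_mul_comm, show B*B*A*A = B*B*(A*A) by noncomm_ring,
      Matrix.trace_mul_comm]
    noncomm_ring
  have h2 : (B*A*(B*A)).trace = (A*B*A*B).trace := by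
    rw [show B*A*(B*A) = B*(A*B*A) by noncomm_ring, Matrix.trace_mul_comm]
  have h3 : (A*B*(B*A)).trace = (A*A*B*B).trace := by
    rw [show A*B*(B*A) = A*(B*B*A) by noncomm_ring, Matrix.trace_mul_comm,
      show B*B*A*A = B*B*(A*A) by noncomm_ring, Matrix.trace_mul_comm]
    noncomm_ring
  have h4 : (A*B*(A*B)).trace = (A*B*A*B).trace := by noncomm_ring
  have expand : ((B*A - A*B) * (A*B - B*A)).trace
      = (B*A*(A*B)).trace - (B*A*(B*A)).trace - (A*B*(A*B)).trace + (A*B*(B*A)).trace := by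
    simp only [Matrix.sub_mul, Matrix.mul_sub, Matrix.trace_sub]
    ring
  rw [expand, h1, h2, h3, h4] at key
  linarith
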